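/- Let M₁, …, M_Q ∈ Matrix (Fin n) (Fin n) ℂ, let θ ∈ ℝ^Q define M = Σ_j θ_j M_j, and let M̄ ∈ Matrix (Fin n) (Fin n) ℂ be invertible. Suppose v* is a nonzero vector attaining β = inf_{v≠0} Re(v* M̄* M v)/‖M̄ v‖₂². Then the vector z(v*) with entries z_j(v*) = Re(v*ᵀ̄ M̄* M_j v*)/‖M̄ v*‖₂² satisfies the box constraints −σ_max(M_j)/σ_min(M̄) ≤ z_j(v*) ≤ σ_max(M_j)/σ_min(M̄) for all j, and satisfies Σ_j θ'_j z_j(v*) ≥ inf_{w≠0} Re(w* M̄* (Σ_j θ'_j M_j) w)/‖M̄ w‖₂² for every θ' ∈ ℝ^Q. Consequently, the infimum of Σ_j θ_j z_j over all z ∈ ℝ^Q satisfying these box constraints and finitely many such linear constraints is at most β. -/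

import Mathlib

open Matrix

/-- Euclidean (ℓ²) norm of a complex vector. -/
noncomputable def vecNorm {n : ℕ} (v : Fin n → ℂ) : ℝ :=
  Real.sqrt (∑ i, ‖v i‖ ^ 2)

/-- Largest singular value (spectral norm) of a complex matrix. -/
noncomputable def sigmaMax {m n : ℕ} (M : Matrix (Fin m) (Fin n) ℂ) : ℝ :=
  ⨆ v : {v : Fin n → ℂ // vecNorm v = 1}, vecNorm (M.mulVec v.1)

/-- Smallest singular value of a square complex matrix. -/
noncomputable def sigmaMin {n : ℕ} (M : Matrix (Fin n) (Fin n) ℂ) : ℝ :=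
  ⨅ v : {v : Fin n → ℂ // vecNorm v = 1}, vecNorm (M.mulVec v.1)

/-- The NNSCM component `z_j(v) = Re(v* M̄* N v) / ‖M̄ v‖₂²`. -/
noncomputable def nnZ {n : ℕ} (Mb N : Matrix (Fin n) (Fin n) ℂ) (v : Fin n → ℂ) : ℝ :=
  (star v ⬝ᵥ (Mbᴴ * N).mulVec v).re / ∑ i, ‖Mb.mulVec v i‖ ^ 2

/-- The NNSCM linearized stability factor
`β = inf_{w ≠ 0} Re(w* M̄* M w) / ‖M̄ w‖₂²`. -/
noncomputable def nnBeta {n : ℕ} (Mb M : Matrix (Fin n) (Fin n) ℂ) : ℝ :=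
  ⨅ w : {w : Fin n → ℂ // w ≠ 0}, nnZ Mb M w.1

namespace NNSCMaux

noncomputable def toEuc {n : ℕ} (v : Fin n → ℂ) : EuclideanSpace ℂ (Fin n) :=
  (WithLp.equiv 2 _).symm v

lemma vecNorm_eq {n : ℕ} (v : Fin n → ℂ) : vecNorm v = ‖toEuc v‖ := by
  rw [EuclideanSpace.norm_eq]; rfl

lemma sum_sq_eq {n : ℕ} (v : Fin n → ℂ) : ∑ i, ‖v i‖ ^ 2 = vecNorm v ^ 2 := by
  rw [vecNorm_eq, EuclideanSpace.norm_eq, Real.sq_sqrt (by positivity)]; rfl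

lemma vecNorm_nonneg {n : ℕ} (v : Fin n → ℂ) : 0 ≤ vecNorm v := Real.sqrt_nonneg _

lemma vecNorm_pos {n : ℕ} {v : Fin n → ℂ} (hv : v ≠ 0) : 0 < vecNorm v := by
  rw [vecNorm_eq, norm_pos_iff]
  intro h
  apply hv
  have := congrArg (WithLp.equiv 2 (Fin n → ℂ)) h
  simpa [toEuc] using this

lemma vecNorm_smul {n : ℕ} (c : ℝ) (v : Fin n → ℂ) :
    vecNorm ((c : ℂ) • v) = |c| * vecNorm v := by
  rw [vecNorm_eq, vecNorm_eq]
  have : toEuc ((c : ℂ) • v) = (c : ℂ) • toEuc v := rfl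
  rw [this, norm_smul]
  simp

lemma inner_eq {n : ℕ} (Mb N : Matrix (Fin n) (Fin n) ℂ) (v : Fin n → ℂ) :
    star v ⬝ᵥ (Mbᴴ * N).mulVec v = inner ℂ (toEuc (Mb.mulVec v)) (toEuc (N.mulVec v)) := by
  rw [EuclideanSpace.inner_eq_star_dotProduct, dotProduct_comm (WithLp.ofLp (toEuc (N.mulVec v)))]
  show _ = star (Mb.mulVec v) ⬝ᵥ (N.mulVec v)
  rw [← Matrix.mulVec_mulVec, Matrix.star_mulVec, ← Matrix.dotProduct_mulVec]

open scoped Matrix.Norms.L2Operator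

lemma opBound {n : ℕ} (A : Matrix (Fin n) (Fin n) ℂ) (v : Fin n → ℂ) :
    vecNorm (A.mulVec v) ≤ ‖A‖ * vecNorm v := by
  have h := Matrix.l2_opNorm_mulVec A (toEuc v)
  rw [vecNorm_eq, vecNorm_eq]
  exact h

/-- normalized vector -/
noncomputable def unit {n : ℕ} (v : Fin n → ℂ) : Fin n → ℂ :=
  ((vecNorm v)⁻¹ : ℝ) • v

lemma unit_eq {n : ℕ} (v : Fin n → ℂ) :
    unit v = (((vecNorm v)⁻¹ : ℝ) : ℂ) • v := by
  funext i; simp [unit, Complex.real_smul]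

lemma vecNorm_unit {n : ℕ} {v : Fin n → ℂ} (hv : v ≠ 0) : vecNorm (unit v) = 1 := by
  rw [unit_eq, vecNorm_smul, abs_of_pos (inv_pos.mpr (vecNorm_pos hv))]
  exact inv_mul_cancel₀ (ne_of_gt (vecNorm_pos hv))

lemma sphere_nonempty {n : ℕ} {v : Fin n → ℂ} (hv : v ≠ 0) :
    Nonempty {u : Fin n → ℂ // vecNorm u = 1} := ⟨⟨unit v, vecNorm_unit hv⟩⟩

lemma mulVec_unit {n : ℕ} (A : Matrix (Fin n) (Fin n) ℂ) (v : Fin n → ℂ) :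
    vecNorm (A.mulVec (unit v)) = (vecNorm v)⁻¹ * vecNorm (A.mulVec v) := by
  rw [unit_eq, Matrix.mulVec_smul, vecNorm_smul,
    abs_of_nonneg (inv_nonneg.mpr (vecNorm_nonneg v))]

lemma sigmaMax_bdd {n : ℕ} (A : Matrix (Fin n) (Fin n) ℂ) :
    BddAbove (Set.range fun u : {u : Fin n → ℂ // vecNorm u = 1} =>
      vecNorm (A.mulVec u.1)) := by
  refine ⟨‖A‖, ?_⟩
  rintro x ⟨u, rfl⟩
  calc vecNorm (A.mulVec u.1) ≤ ‖A‖ * vecNorm u.1 := opBound A u.1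
    _ = ‖A‖ := by rw [u.2, mul_one]

lemma le_sigmaMax {n : ℕ} (A : Matrix (Fin n) (Fin n) ℂ) (v : Fin n → ℂ) :
    vecNorm (A.mulVec v) ≤ sigmaMax A * vecNorm v := by
  rcases eq_or_ne v 0 with rfl | hv
  · simp [Matrix.mulVec_zero, vecNorm, Real.sqrt_eq_zero']
  · have h1 : vecNorm (A.mulVec (unit v)) ≤ sigmaMax A :=
      le_ciSup (sigmaMax_bdd A) ⟨unit v, vecNorm_unit hv⟩
    rw [mulVec_unit] at h1
    have hp := vecNorm_pos hv
    calc vecNorm (A.mulVec v)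
        = ((vecNorm v)⁻¹ * vecNorm (A.mulVec v)) * vecNorm v := by field_simp
      _ ≤ sigmaMax A * vecNorm v := mul_le_mul_of_nonneg_right h1 (vecNorm_nonneg v)

lemma sigmaMax_nonneg {n : ℕ} (A : Matrix (Fin n) (Fin n) ℂ) : 0 ≤ sigmaMax A := by
  rcases isEmpty_or_nonempty {u : Fin n → ℂ // vecNorm u = 1} with h | h
  · rw [sigmaMax, Real.iSup_of_isEmpty]
  · exact le_ciSup_of_le (sigmaMax_bdd A) h.some (vecNorm_nonneg _)

lemma sigmaMin_le_mulVec {n : ℕ} (Mb : Matrix (Fin n) (Fin n) ℂ) {v : Fin n → ℂ}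
    (hv : v ≠ 0) : sigmaMin Mb * vecNorm v ≤ vecNorm (Mb.mulVec v) := by
  have hbdd : BddBelow (Set.range fun u : {u : Fin n → ℂ // vecNorm u = 1} =>
      vecNorm (Mb.mulVec u.1)) := by
    refine ⟨0, ?_⟩; rintro x ⟨u, rfl⟩; exact vecNorm_nonneg _
  have h1 : sigmaMin Mb ≤ vecNorm (Mb.mulVec (unit v)) :=
    ciInf_le hbdd (⟨unit v, vecNorm_unit hv⟩ : {u : Fin n → ℂ // vecNorm u = 1})
  rw [mulVec_unit] at h1
  have hp := vecNorm_pos hv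
  calc sigmaMin Mb * vecNorm v
      ≤ ((vecNorm v)⁻¹ * vecNorm (Mb.mulVec v)) * vecNorm v :=
        mul_le_mul_of_nonneg_right h1 (vecNorm_nonneg v)
    _ = vecNorm (Mb.mulVec v) := by field_simp

lemma mulVec_cancel {n : ℕ} {Mb : Matrix (Fin n) (Fin n) ℂ} (hMb : IsUnit Mb)
    (v : Fin n → ℂ) : Mb⁻¹.mulVec (Mb.mulVec v) = v := by
  rw [Matrix.mulVec_mulVec,
    Matrix.nonsing_inv_mul Mb ((Matrix.isUnit_iff_isUnit_det Mb).mp hMb), Matrix.one_mulVec]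

lemma sigmaMin_pos {n : ℕ} {Mb : Matrix (Fin n) (Fin n) ℂ} (hMb : IsUnit Mb)
    (hne : Nonempty {u : Fin n → ℂ // vecNorm u = 1}) : 0 < sigmaMin Mb := by
  set c := ‖Mb⁻¹‖ with hc
  have key : ∀ u : {u : Fin n → ℂ // vecNorm u = 1}, 1 ≤ c * vecNorm (Mb.mulVec u.1) := by
    intro u
    have := opBound Mb⁻¹ (Mb.mulVec u.1)
    rw [mulVec_cancel hMb, u.2] at this
    linarith
  have hcpos : 0 < c := by
    obtain ⟨u⟩ := hne
    by_contra h
    push_neg at h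
    have := key u
    nlinarith [vecNorm_nonneg (Mb.mulVec u.1)]
  have : c⁻¹ ≤ sigmaMin Mb := by
    apply le_ciInf
    intro u
    rw [inv_eq_one_div, div_le_iff₀ hcpos]
    linarith [key u]
  exact lt_of_lt_of_le (inv_pos.mpr hcpos) this

/-- additivity of nnZ in the matrix argument -/
lemma nnZ_add {n : ℕ} (Mb A B : Matrix (Fin n) (Fin n) ℂ) (v : Fin n → ℂ) :
    nnZ Mb (A + B) v = nnZ Mb A v + nnZ Mb B v := by
  unfold nnZ
  rw [mul_add, Matrix.add_mulVec, dotProduct_add, Complex.add_re, add_div]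

lemma nnZ_zero {n : ℕ} (Mb : Matrix (Fin n) (Fin n) ℂ) (v : Fin n → ℂ) :
    nnZ Mb 0 v = 0 := by
  unfold nnZ
  simp

lemma nnZ_smul {n : ℕ} (Mb A : Matrix (Fin n) (Fin n) ℂ) (c : ℝ) (v : Fin n → ℂ) :
    nnZ Mb ((c : ℂ) • A) v = c * nnZ Mb A v := by
  unfold nnZ
  rw [Matrix.mul_smul, Matrix.smul_mulVec, dotProduct_smul, smul_eq_mul,
    Complex.re_ofReal_mul, mul_div_assoc]

lemma nnZ_sum {n Q : ℕ} (Mb : Matrix (Fin n) (Fin n) ℂ) (M : Fin Q → Matrix (Fin n) (Fin n) ℂ)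
    (c : Fin Q → ℝ) (v : Fin n → ℂ) :
    nnZ Mb (∑ j, (c j : ℂ) • M j) v = ∑ j, c j * nnZ Mb (M j) v := by
  let φ : Matrix (Fin n) (Fin n) ℂ →+ ℝ :=
    { toFun := fun A => nnZ Mb A v
      map_zero' := nnZ_zero Mb v
      map_add' := fun A B => nnZ_add Mb A B v }
  calc nnZ Mb (∑ j, (c j : ℂ) • M j) v = φ (∑ j, (c j : ℂ) • M j) := rfl
    _ = ∑ j, φ ((c j : ℂ) • M j) := map_sum φ _ _
    _ = ∑ j, c j * nnZ Mb (M j) v :=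
        Finset.sum_congr rfl fun j _ => nnZ_smul Mb (M j) (c j) v

/-- the box bound -/
lemma box {n : ℕ} {Mb : Matrix (Fin n) (Fin n) ℂ} (hMb : IsUnit Mb)
    (N : Matrix (Fin n) (Fin n) ℂ) {v : Fin n → ℂ} (hv : v ≠ 0) :
    |nnZ Mb N v| ≤ sigmaMax N / sigmaMin Mb := by
  have hsmin : 0 < sigmaMin Mb := sigmaMin_pos hMb (sphere_nonempty hv)
  have hMv : Mb.mulVec v ≠ 0 := fun h =>
    hv (by rw [← mulVec_cancel hMb v, h, Matrix.mulVec_zero])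
  have ha : 0 < vecNorm (Mb.mulVec v) := vecNorm_pos hMv
  set a := vecNorm (Mb.mulVec v) with ha_def
  have hd : ∑ i, ‖Mb.mulVec v i‖ ^ 2 = a ^ 2 := sum_sq_eq _
  have hre : |(star v ⬝ᵥ (Mbᴴ * N).mulVec v).re| ≤ a * (sigmaMax N * vecNorm v) := by
    rw [inner_eq]
    calc |(inner ℂ (toEuc (Mb.mulVec v)) (toEuc (N.mulVec v)) : ℂ).re|
        ≤ ‖(inner ℂ (toEuc (Mb.mulVec v)) (toEuc (N.mulVec v)) : ℂ)‖ := by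
          exact Complex.abs_re_le_norm _
      _ ≤ ‖toEuc (Mb.mulVec v)‖ * ‖toEuc (N.mulVec v)‖ := norm_inner_le_norm _ _
      _ = a * vecNorm (N.mulVec v) := by rw [← vecNorm_eq, ← vecNorm_eq]
      _ ≤ a * (sigmaMax N * vecNorm v) :=
          mul_le_mul_of_nonneg_left (le_sigmaMax N v) ha.le
  have hmin : sigmaMin Mb * vecNorm v ≤ a := sigmaMin_le_mulVec Mb hv
  rw [nnZ, hd, abs_div, abs_of_pos (pow_pos ha 2), div_le_div_iff₀ (pow_pos ha 2) hsmin]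
  calc |(star v ⬝ᵥ (Mbᴴ * N).mulVec v).re| * sigmaMin Mb
      ≤ (a * (sigmaMax N * vecNorm v)) * sigmaMin Mb :=
        mul_le_mul_of_nonneg_right hre hsmin.le
    _ = (a * sigmaMax N) * (sigmaMin Mb * vecNorm v) := by ring
    _ ≤ (a * sigmaMax N) * a :=
        mul_le_mul_of_nonneg_left hmin (mul_nonneg ha.le (sigmaMax_nonneg N))
    _ = sigmaMax N * a ^ 2 := by ring

lemma nnBeta_bdd {n : ℕ} {Mb : Matrix (Fin n) (Fin n) ℂ} (hMb : IsUnit Mb)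
    (N : Matrix (Fin n) (Fin n) ℂ) :
    BddBelow (Set.range fun w : {w : Fin n → ℂ // w ≠ 0} => nnZ Mb N w.1) := by
  refine ⟨-(sigmaMax N / sigmaMin Mb), ?_⟩
  rintro x ⟨w, rfl⟩
  exact neg_le_of_abs_le (box hMb N w.2)

lemma nnBeta_le_nnZ {n : ℕ} {Mb : Matrix (Fin n) (Fin n) ℂ} (hMb : IsUnit Mb)
    (N : Matrix (Fin n) (Fin n) ℂ) {v : Fin n → ℂ} (hv : v ≠ 0) :
    nnBeta Mb N ≤ nnZ Mb N v :=
  ciInf_le (nnBeta_bdd hMb N) (⟨v, hv⟩ : {w : Fin n → ℂ // w ≠ 0})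

end NNSCMaux

open NNSCMaux

/-- Feasibility of the exact NNSCM vector `z(v*)` for the NNSCM linear program when
`v*` attains `β`: it satisfies the box constraints `|z_j| ≤ σ_max(M_j)/σ_min(M̄)`, the
linear constraints `Σ_j θ'_j z_j ≥ β(θ')` for every `θ'`, and consequently the NNSCM
linear-program value is at most `β`. -/
theorem stmt11 {n Q : ℕ} (M : Fin Q → Matrix (Fin n) (Fin n) ℂ) (θ : Fin Q → ℝ)
    (Mb : Matrix (Fin n) (Fin n) ℂ) (hMb : IsUnit Mb)
    (vstar : Fin n → ℂ) (hvstar : vstar ≠ 0)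
    (hattain : nnZ Mb (∑ j, (θ j : ℂ) • M j) vstar = nnBeta Mb (∑ j, (θ j : ℂ) • M j)) :
    (∀ j : Fin Q,
        -(sigmaMax (M j) / sigmaMin Mb) ≤ nnZ Mb (M j) vstar ∧
          nnZ Mb (M j) vstar ≤ sigmaMax (M j) / sigmaMin Mb) ∧
      (∀ θ' : Fin Q → ℝ,
        nnBeta Mb (∑ j, (θ' j : ℂ) • M j) ≤ ∑ j, θ' j * nnZ Mb (M j) vstar) ∧
      ∀ (k : ℕ) (θs : Fin k → Fin Q → ℝ),
        sInf {t : ℝ | ∃ z : Fin Q → ℝ,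
            (∀ j : Fin Q,
              -(sigmaMax (M j) / sigmaMin Mb) ≤ z j ∧ z j ≤ sigmaMax (M j) / sigmaMin Mb) ∧
            (∀ ℓ : Fin k, nnBeta Mb (∑ j, (θs ℓ j : ℂ) • M j) ≤ ∑ j, θs ℓ j * z j) ∧
            t = ∑ j, θ j * z j}
          ≤ nnBeta Mb (∑ j, (θ j : ℂ) • M j) := by
  have hbox : ∀ j : Fin Q,
      -(sigmaMax (M j) / sigmaMin Mb) ≤ nnZ Mb (M j) vstar ∧
        nnZ Mb (M j) vstar ≤ sigmaMax (M j) / sigmaMin Mb := fun j =>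
    abs_le.mp (box hMb (M j) hvstar)
  have hlin : ∀ θ' : Fin Q → ℝ,
      nnBeta Mb (∑ j, (θ' j : ℂ) • M j) ≤ ∑ j, θ' j * nnZ Mb (M j) vstar := fun θ' => by
    rw [← nnZ_sum Mb M θ' vstar]
    exact nnBeta_le_nnZ hMb _ hvstar
  refine ⟨hbox, hlin, fun k θs => ?_⟩
  set S := {t : ℝ | ∃ z : Fin Q → ℝ,
      (∀ j : Fin Q,
        -(sigmaMax (M j) / sigmaMin Mb) ≤ z j ∧ z j ≤ sigmaMax (M j) / sigmaMin Mb) ∧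
      (∀ ℓ : Fin k, nnBeta Mb (∑ j, (θs ℓ j : ℂ) • M j) ≤ ∑ j, θs ℓ j * z j) ∧
      t = ∑ j, θ j * z j} with hS
  have hmem : (∑ j, θ j * nnZ Mb (M j) vstar) ∈ S :=
    ⟨fun j => nnZ Mb (M j) vstar, hbox, fun ℓ => hlin (θs ℓ), rfl⟩
  have hbddS : BddBelow S := by
    refine ⟨-(∑ j, |θ j| * (sigmaMax (M j) / sigmaMin Mb)), ?_⟩
    rintro t ⟨z, hz, -, rfl⟩
    rw [← Finset.sum_neg_distrib]
    apply Finset.sum_le_sum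
    intro j _
    have habs : |z j| ≤ sigmaMax (M j) / sigmaMin Mb := abs_le.mpr (hz j)
    have : |θ j * z j| ≤ |θ j| * (sigmaMax (M j) / sigmaMin Mb) := by
      rw [abs_mul]
      exact mul_le_mul_of_nonneg_left habs (abs_nonneg _)
    linarith [neg_abs_le (θ j * z j)]
  have heq : (∑ j, θ j * nnZ Mb (M j) vstar) = nnBeta Mb (∑ j, (θ j : ℂ) • M j) := by
    rw [← nnZ_sum Mb M θ vstar, hattain]
  calc sInf S ≤ ∑ j, θ j * nnZ Mb (M j) vstar := csInf_le hbddS hmem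
    _ = nnBeta Mb (∑ j, (θ j : ℂ) • M j) := heq
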